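/- Let (n, ⟨·,·⟩) be a finite-dimensional real nilpotent Lie algebra with an inner product, and let Ric^n be its Ricci operator, defined by ⟨Ric^n X, Y⟩ = (1/4)·Σ_{i,j} ⟨X, [E_i, E_j]⟩·⟨Y, [E_i, E_j]⟩ − (1/2)·Σ_{i,j} ⟨[X, E_i], E_j⟩·⟨[Y, E_i], E_j⟩ for any orthonormal basis {E_i} of n. If I ⊆ n is an abelian Lie ideal of codimension one, then Tr(Ric^n π_I) = 0, where π_I is the orthogonal projection of n onto I; equivalently, Σ_j ⟨Ric^n e_j, e_j⟩ = 0 for any orthonormal basis {e_j} of I. -/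

import Mathlib

open scoped BigOperators

/-- `B` is an inner product on `n`: a symmetric, positive-definite bilinear form. -/
def IsInnerProduct {n : Type*} [AddCommGroup n] [Module ℝ n]
    (B : LinearMap.BilinForm ℝ n) : Prop :=
  (∀ x y : n, B x y = B y x) ∧ (∀ x : n, x ≠ 0 → 0 < B x x)

/-- The basis `E` is orthonormal with respect to the bilinear form `B`. -/
def IsOrthonormalBasis {n : Type*} [AddCommGroup n] [Module ℝ n] {ι : Type*}
    (B : LinearMap.BilinForm ℝ n) (E : Module.Basis ι ℝ n) : Prop :=
  (∀ i, B (E i) (E i) = 1) ∧ ∀ i j, i ≠ j → B (E i) (E j) = 0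

/-- The Ricci form `⟨Ric^n X, Y⟩` of a metric nilpotent Lie algebra `(n, B)`, computed in the
orthonormal basis `E`. -/
noncomputable def ricNilForm {n : Type*} [LieRing n] [LieAlgebra ℝ n] {ι : Type*} [Fintype ι]
    (B : LinearMap.BilinForm ℝ n) (E : Module.Basis ι ℝ n) (X Y : n) : ℝ :=
  (1/4) * ∑ i, ∑ j, (B X ⁅E i, E j⁆) * (B Y ⁅E i, E j⁆)
    - (1/2) * ∑ i, ∑ j, (B ⁅X, E i⁆ (E j)) * (B ⁅Y, E i⁆ (E j))

/-- Coefficient extraction for orthonormal families. -/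
lemma bilin_coef {n : Type*} [AddCommGroup n] [Module ℝ n] {ι : Type*} [Fintype ι]
    (B : LinearMap.BilinForm ℝ n) (f : ι → n)
    (hf1 : ∀ j, B (f j) (f j) = 1) (hf0 : ∀ j k, j ≠ k → B (f j) (f k) = 0)
    (c : ι → ℝ) (k : ι) : B (∑ l, c l • f l) (f k) = c k := by
  simp only [map_sum, map_smul, LinearMap.sum_apply, LinearMap.smul_apply, smul_eq_mul]
  rw [Finset.sum_eq_single k]
  · rw [hf1]; ring
  · intro l _ hl; rw [hf0 l k hl]; ring
  · simp

/-- For a finite-dimensional real nilpotent metric Lie algebra `(n, B)` and an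
abelian Lie ideal `I` of codimension one, `Tr(Ric^n π_I) = 0`; equivalently,
`Σ_j ⟨Ric^n e_j, e_j⟩ = 0` for any orthonormal basis `{e_j}` of `I`. -/
theorem traceRic_abelian_codim_one_ideal_eq_zero
    (n : Type*) [LieRing n] [LieAlgebra ℝ n] [Module.Finite ℝ n]
    [LieRing.IsNilpotent n]
    (B : LinearMap.BilinForm ℝ n) (hB : IsInnerProduct B)
    {ι : Type*} [Fintype ι] (E : Module.Basis ι ℝ n) (hE : IsOrthonormalBasis B E)
    (I : LieIdeal ℝ n) (habelian : IsLieAbelian I)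
    (hcodim : Module.finrank ℝ I + 1 = Module.finrank ℝ n)
    {κ : Type*} [Fintype κ] (f : κ → n) (hfI : ∀ j, f j ∈ I)
    (hf1 : ∀ j, B (f j) (f j) = 1) (hf0 : ∀ j k, j ≠ k → B (f j) (f k) = 0)
    (hfspan : ∀ x : n, x ∈ I ↔ x ∈ Submodule.span ℝ (Set.range f)) :
    ∑ j, ricNilForm B E (f j) (f j) = 0 := by
  obtain ⟨hsym, hpos⟩ := hB
  obtain ⟨hE1, hE0⟩ := hE
  -- expansion in the orthonormal basis E
  have hexpB : ∀ x : n, ∑ i, B x (E i) • E i = x := by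
    intro x
    have h1 : ∀ i, E.repr x i = B x (E i) := by
      intro i
      conv_rhs => rw [← E.sum_repr x]
      rw [bilin_coef B E hE1 hE0]
    conv_rhs => rw [← E.sum_repr x]
    exact Finset.sum_congr rfl fun i _ => by rw [h1]
  -- Parseval for E
  have hPar : ∀ x y : n, ∑ i, B x (E i) * B y (E i) = B x y := by
    intro x y
    conv_rhs => rw [← hexpB y]
    rw [map_sum]
    simp only [map_smul, smul_eq_mul]
    exact Finset.sum_congr rfl fun i _ => mul_comm _ _
  -- representations over f
  have hfrep : ∀ x, x ∈ I → ∃ c : κ → ℝ, ∑ k, c k • f k = x := fun x hx =>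
    (Submodule.mem_span_range_iff_exists_fun ℝ).mp ((hfspan x).mp hx)
  -- Parseval for f on I
  have hfPar : ∀ x y : n, x ∈ I → y ∈ I → ∑ k, B x (f k) * B y (f k) = B x y := by
    intro x y hx _
    obtain ⟨c, hc⟩ := hfrep x hx
    rw [← hc]
    calc ∑ k, B (∑ l, c l • f l) (f k) * B y (f k)
        = ∑ k, c k * B y (f k) :=
          Finset.sum_congr rfl fun k _ => by rw [bilin_coef B f hf1 hf0]
      _ = B y (∑ k, c k • f k) := by
          rw [map_sum]
          exact Finset.sum_congr rfl fun k _ => by rw [map_smul, smul_eq_mul]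
      _ = B (∑ k, c k • f k) y := (hsym _ _).symm
  have hfPar2 : ∀ v : n, v ∈ I → ∑ k, B (f k) v * B (f k) v = B v v := by
    intro v hv
    rw [← hfPar v v hv hv]
    exact Finset.sum_congr rfl fun k _ => by rw [hsym (f k) v]
  -- abelian
  have hab : ∀ u v : n, u ∈ I → v ∈ I → ⁅u, v⁆ = 0 := by
    intro u v hu hv
    have h1 := trivial_lie_zero _ _ (⟨u, hu⟩ : I) (⟨v, hv⟩ : I)
    have h2 : (↑(⁅(⟨u, hu⟩ : I), (⟨v, hv⟩ : I)⁆) : n) = ⁅u, v⁆ := rfl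
    rw [h1] at h2; simpa using h2.symm
  -- there is a vector outside I
  have hIfin : Module.finrank ℝ I = Module.finrank ℝ I.toSubmodule := rfl
  have hItop : (I.toSubmodule : Submodule ℝ n) ≠ ⊤ := by
    intro h
    have h2 : Module.finrank ℝ I.toSubmodule = Module.finrank ℝ n := by
      rw [h]; exact finrank_top ℝ n
    omega
  obtain ⟨y, hy⟩ : ∃ y : n, y ∉ I := by
    by_contra h; push_neg at h
    exact hItop (Submodule.eq_top_iff'.mpr fun x => h x)
  -- Gram-Schmidt: vector orthogonal to I
  have hZ0f : ∀ k, B (y - ∑ l, B y (f l) • f l) (f k) = 0 := by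
    intro k
    rw [map_sub, LinearMap.sub_apply, bilin_coef B f hf1 hf0]
    ring
  have hsumI : (∑ l, B y (f l) • f l) ∈ I := by
    have : (∑ l, B y (f l) • f l) ∈ I.toSubmodule :=
      Submodule.sum_mem _ fun l _ => Submodule.smul_mem _ _ (hfI l)
    exact this
  have hZ0I : (y - ∑ l, B y (f l) • f l) ∉ I := by
    intro h
    apply hy
    have h2 : y = (y - ∑ l, B y (f l) • f l) + ∑ l, B y (f l) • f l := by abel
    rw [h2]
    exact I.add_mem' h hsumI
  have hZ0ne : (y - ∑ l, B y (f l) • f l) ≠ 0 := by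
    intro h; exact hZ0I (h ▸ I.zero_mem')
  set Z0 : n := y - ∑ l, B y (f l) • f l with hZ0def
  have hc0 : 0 < B Z0 Z0 := hpos _ hZ0ne
  set Z : n := (Real.sqrt (B Z0 Z0))⁻¹ • Z0 with hZdef
  have hsne : Real.sqrt (B Z0 Z0) ≠ 0 := ne_of_gt (Real.sqrt_pos.mpr hc0)
  have hZ1 : B Z Z = 1 := by
    rw [hZdef]
    simp only [map_smul, LinearMap.smul_apply, smul_eq_mul]
    rw [mul_comm, mul_assoc, ← Real.sqrt_mul_self hc0.le]
    field_simp
    rw [Real.sq_sqrt (Real.sqrt_nonneg _)]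
  have hZf : ∀ k, B Z (f k) = 0 := by
    intro k
    rw [hZdef]
    simp only [map_smul, LinearMap.smul_apply, smul_eq_mul]
    rw [hZ0f k]; ring
  have hZI : ∀ u, u ∈ I → B Z u = 0 := by
    intro u hu
    obtain ⟨c, hc⟩ := hfrep u hu
    rw [← hc, map_sum]
    simp only [map_smul, smul_eq_mul]
    exact Finset.sum_eq_zero fun k _ => by rw [hZf k]; ring
  have hZnI : Z ∉ I := by
    intro h
    rw [hZI Z h] at hZ1
    norm_num at hZ1
  clear_value Z
  clear_value Z0
  -- decomposition
  have hdec : ∀ x : n, x - B Z x • Z ∈ I := by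
    have hS : I.toSubmodule ⊔ (ℝ ∙ Z) = ⊤ := by
      have hZmem : Z ∈ I.toSubmodule ⊔ (ℝ ∙ Z) :=
        Submodule.mem_sup_right (Submodule.mem_span_singleton_self Z)
      have hlt : I.toSubmodule < I.toSubmodule ⊔ (ℝ ∙ Z) := by
        refine lt_of_le_of_ne le_sup_left fun h => hZnI ?_
        have hmem : Z ∈ I.toSubmodule := by rw [h]; exact hZmem
        exact hmem
      have h1 : Module.finrank ℝ I.toSubmodule
          < Module.finrank ℝ (I.toSubmodule ⊔ (ℝ ∙ Z) : Submodule ℝ n) :=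
        Submodule.finrank_lt_finrank_of_lt hlt
      have h2 : Module.finrank ℝ (I.toSubmodule ⊔ (ℝ ∙ Z) : Submodule ℝ n)
          ≤ Module.finrank ℝ n := Submodule.finrank_le _
      exact Submodule.eq_top_of_finrank_eq (by omega)
    intro x
    have hx : x ∈ I.toSubmodule ⊔ (ℝ ∙ Z) := by rw [hS]; trivial
    obtain ⟨u, hu, z, hz, hx'⟩ := Submodule.mem_sup.mp hx
    obtain ⟨t, rfl⟩ := Submodule.mem_span_singleton.mp hz
    have hBu : B Z u = 0 := hZI u hu
    have ht : B Z x = t := by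
      rw [← hx']
      simp only [map_add, map_smul, smul_eq_mul, hBu, hZ1]
      ring
    rw [ht, ← hx']
    have he : u + t • Z - t • Z = u := by abel
    rw [he]
    exact hu
  -- bracket structure
  have hlie : ∀ x y : n, ⁅x, y⁆ = B Z x • ⁅Z, y⁆ - B Z y • ⁅Z, x⁆ := by
    intro x y
    have key : ⁅x - B Z x • Z, y - B Z y • Z⁆ = 0 := hab _ _ (hdec x) (hdec y)
    have expand : ⁅x - B Z x • Z, y - B Z y • Z⁆
        = ⁅x, y⁆ + B Z y • ⁅Z, x⁆ - B Z x • ⁅Z, y⁆ := by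
      simp only [sub_lie, lie_sub, smul_lie, lie_smul, lie_self, smul_zero, sub_zero,
        smul_smul, ← lie_skew x Z, smul_neg]
      abel
    rw [expand] at key
    rw [← sub_eq_zero]
    rw [show ⁅x, y⁆ - (B Z x • ⁅Z, y⁆ - B Z y • ⁅Z, x⁆)
        = ⁅x, y⁆ + B Z y • ⁅Z, x⁆ - B Z x • ⁅Z, y⁆ from by abel]
    exact key
  -- basic data
  have hsuma : ∑ i, B Z (E i) * B Z (E i) = 1 := by rw [hPar, hZ1]
  have hwI : ∀ i, ⁅Z, E i⁆ ∈ I := by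
    intro i
    have h1 : (⁅Z, E i⁆ : n) = ⁅Z, E i - B Z (E i) • Z⁆ := by
      rw [lie_sub, lie_smul, lie_self, smul_zero, sub_zero]
    rw [h1]; exact I.lie_mem (hdec (E i))
  have hgI : ∀ k, ⁅Z, f k⁆ ∈ I := fun k => I.lie_mem (hfI k)
  have hsumw : ∑ i, B Z (E i) • ⁅Z, E i⁆ = (0 : n) := by
    calc ∑ i, B Z (E i) • ⁅Z, E i⁆ = ∑ i, ⁅Z, B Z (E i) • E i⁆ :=
          Finset.sum_congr rfl fun i _ => (lie_smul _ _ _).symm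
      _ = ⁅Z, ∑ i, B Z (E i) • E i⁆ :=
          (map_sum (LieAlgebra.ad ℝ n Z) _ Finset.univ).symm
      _ = ⁅Z, Z⁆ := by rw [hexpB]
      _ = 0 := lie_self Z
  have hEE : ∀ i j, ⁅E i, E j⁆ = B Z (E i) • ⁅Z, E j⁆ - B Z (E j) • ⁅Z, E i⁆ :=
    fun i j => hlie _ _
  have hfE : ∀ (k : κ) (i : ι), ⁅f k, E i⁆ = -(B Z (E i) • ⁅Z, f k⁆) := by
    intro k i
    rw [hlie (f k) (E i), hZI _ (hfI k), zero_smul, zero_sub]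
  have hvI : ∀ i j, ⁅E i, E j⁆ ∈ I := by
    intro i j
    rw [hEE]
    have h : B Z (E i) • ⁅Z, E j⁆ - B Z (E j) • ⁅Z, E i⁆ ∈ I.toSubmodule :=
      Submodule.sub_mem _ (Submodule.smul_mem _ _ (hwI j)) (Submodule.smul_mem _ _ (hwI i))
    exact h
  -- the second Ricci sum
  have hS2 : ∀ k, ∑ i, ∑ j, (B ⁅f k, E i⁆ (E j)) * (B ⁅f k, E i⁆ (E j))
      = B ⁅Z, f k⁆ ⁅Z, f k⁆ := by
    intro k
    calc ∑ i, ∑ j, (B ⁅f k, E i⁆ (E j)) * (B ⁅f k, E i⁆ (E j))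
        = ∑ i, ∑ j, (B Z (E i) * B Z (E i)) * (B ⁅Z, f k⁆ (E j) * B ⁅Z, f k⁆ (E j)) := by
          refine Finset.sum_congr rfl fun i _ => Finset.sum_congr rfl fun j _ => ?_
          rw [hfE k i]
          simp only [map_neg, map_smul, LinearMap.neg_apply, LinearMap.smul_apply, smul_eq_mul]
          ring
      _ = (∑ i, B Z (E i) * B Z (E i)) * (∑ j, B ⁅Z, f k⁆ (E j) * B ⁅Z, f k⁆ (E j)) :=
          (Finset.sum_mul_sum _ _ _ _).symm
      _ = B ⁅Z, f k⁆ ⁅Z, f k⁆ := by rw [hsuma, hPar, one_mul]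
  -- cross term vanishes
  have hcross : ∑ i, ∑ j, (B Z (E i) * B Z (E j)) * B ⁅Z, E i⁆ ⁅Z, E j⁆ = 0 := by
    have h1 : ∀ i, ∑ j, (B Z (E i) * B Z (E j)) * B ⁅Z, E i⁆ ⁅Z, E j⁆
        = B Z (E i) * B ⁅Z, E i⁆ (∑ j, B Z (E j) • ⁅Z, E j⁆) := by
      intro i
      rw [map_sum, Finset.mul_sum]
      refine Finset.sum_congr rfl fun j _ => ?_
      rw [map_smul (B ⁅Z, E i⁆), smul_eq_mul]; ring
    calc ∑ i, ∑ j, (B Z (E i) * B Z (E j)) * B ⁅Z, E i⁆ ⁅Z, E j⁆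
        = ∑ i, B Z (E i) * B ⁅Z, E i⁆ (∑ j, B Z (E j) • ⁅Z, E j⁆) :=
          Finset.sum_congr rfl fun i _ => h1 i
      _ = 0 := by rw [hsumw]; simp
  -- the first Ricci sum
  have hS1a : ∑ k, ∑ i, ∑ j, (B (f k) ⁅E i, E j⁆) * (B (f k) ⁅E i, E j⁆)
      = ∑ i, ∑ j, B ⁅E i, E j⁆ ⁅E i, E j⁆ := by
    calc ∑ k, ∑ i, ∑ j, (B (f k) ⁅E i, E j⁆) * (B (f k) ⁅E i, E j⁆)
        = ∑ i, ∑ k, ∑ j, (B (f k) ⁅E i, E j⁆) * (B (f k) ⁅E i, E j⁆) :=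
          Finset.sum_comm
      _ = ∑ i, ∑ j, ∑ k, (B (f k) ⁅E i, E j⁆) * (B (f k) ⁅E i, E j⁆) :=
          Finset.sum_congr rfl fun i _ => Finset.sum_comm
      _ = ∑ i, ∑ j, B ⁅E i, E j⁆ ⁅E i, E j⁆ :=
          Finset.sum_congr rfl fun i _ => Finset.sum_congr rfl fun j _ => hfPar2 _ (hvI i j)
  have hexpEE : ∀ i j, B ⁅E i, E j⁆ ⁅E i, E j⁆
      = (B Z (E i) * B Z (E i)) * B ⁅Z, E j⁆ ⁅Z, E j⁆
        + B ⁅Z, E i⁆ ⁅Z, E i⁆ * (B Z (E j) * B Z (E j))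
        - 2 * ((B Z (E i) * B Z (E j)) * B ⁅Z, E i⁆ ⁅Z, E j⁆) := by
    intro i j
    rw [hEE i j]
    simp only [map_sub, map_smul, LinearMap.sub_apply, LinearMap.smul_apply, smul_eq_mul]
    rw [hsym ⁅Z, E j⁆ ⁅Z, E i⁆]
    ring
  have hS1 : ∑ i, ∑ j, B ⁅E i, E j⁆ ⁅E i, E j⁆ = 2 * ∑ i, B ⁅Z, E i⁆ ⁅Z, E i⁆ := by
    calc ∑ i, ∑ j, B ⁅E i, E j⁆ ⁅E i, E j⁆
        = ∑ i, ∑ j, ((B Z (E i) * B Z (E i)) * B ⁅Z, E j⁆ ⁅Z, E j⁆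
            + B ⁅Z, E i⁆ ⁅Z, E i⁆ * (B Z (E j) * B Z (E j))
            - 2 * ((B Z (E i) * B Z (E j)) * B ⁅Z, E i⁆ ⁅Z, E j⁆)) :=
          Finset.sum_congr rfl fun i _ => Finset.sum_congr rfl fun j _ => hexpEE i j
      _ = (∑ i, B Z (E i) * B Z (E i)) * (∑ j, B ⁅Z, E j⁆ ⁅Z, E j⁆)
            + (∑ i, B ⁅Z, E i⁆ ⁅Z, E i⁆) * (∑ j, B Z (E j) * B Z (E j))
            - 2 * (∑ i, ∑ j, (B Z (E i) * B Z (E j)) * B ⁅Z, E i⁆ ⁅Z, E j⁆) := by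
          rw [Finset.sum_mul_sum, Finset.sum_mul_sum]
          simp only [Finset.sum_sub_distrib, Finset.sum_add_distrib, Finset.mul_sum]
      _ = 2 * ∑ i, B ⁅Z, E i⁆ ⁅Z, E i⁆ := by rw [hsuma, hcross]; ring
  -- the exchange identity
  have hVK : ∀ k : κ, ∑ j, B ⁅Z, E j⁆ (f k) * B ⁅Z, E j⁆ (f k)
      = ∑ l, B ⁅Z, f l⁆ (f k) * B ⁅Z, f l⁆ (f k) := by
    intro k
    set v : n := ∑ j, B ⁅Z, E j⁆ (f k) • E j with hvdef
    have hva : ∀ i, B v (E i) = B ⁅Z, E i⁆ (f k) := fun i => bilin_coef B E hE1 hE0 _ i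
    have hvZ : B Z v = 0 := by
      calc B Z v = ∑ j, B Z (E j) * B ⁅Z, E j⁆ (f k) := by
            rw [hvdef, map_sum]
            exact Finset.sum_congr rfl fun j _ => by rw [map_smul, smul_eq_mul]; ring
        _ = B (∑ j, B Z (E j) • ⁅Z, E j⁆) (f k) := by
            rw [map_sum, LinearMap.sum_apply]
            exact Finset.sum_congr rfl fun j _ => by
              rw [map_smul, LinearMap.smul_apply, smul_eq_mul]
        _ = 0 := by rw [hsumw]; simp
    have hvmem : v ∈ I := by
      have h1 := hdec v
      rw [hvZ, zero_smul, sub_zero] at h1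
      exact h1
    have hvf : ∀ l, B v (f l) = B ⁅Z, f l⁆ (f k) := by
      intro l
      have hfl : (⁅Z, f l⁆ : n) = ∑ j, B (f l) (E j) • ⁅Z, E j⁆ := by
        conv_lhs => rw [← hexpB (f l)]
        calc (⁅Z, ∑ j, B (f l) (E j) • E j⁆ : n) = ∑ j, ⁅Z, B (f l) (E j) • E j⁆ :=
              map_sum (LieAlgebra.ad ℝ n Z) _ Finset.univ
          _ = ∑ j, B (f l) (E j) • ⁅Z, E j⁆ := Finset.sum_congr rfl fun j _ => lie_smul _ _ _
      calc B v (f l) = ∑ j, B ⁅Z, E j⁆ (f k) * B (E j) (f l) := by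
            rw [hvdef, map_sum, LinearMap.sum_apply]
            exact Finset.sum_congr rfl fun j _ => by
              rw [map_smul, LinearMap.smul_apply, smul_eq_mul]
        _ = ∑ j, B (f l) (E j) * B ⁅Z, E j⁆ (f k) := Finset.sum_congr rfl fun j _ => by
              rw [hsym (E j) (f l)]; ring
        _ = B ⁅Z, f l⁆ (f k) := by
            rw [hfl, map_sum, LinearMap.sum_apply]
            exact Finset.sum_congr rfl fun j _ => by
              rw [map_smul, LinearMap.smul_apply, smul_eq_mul]
    calc ∑ j, B ⁅Z, E j⁆ (f k) * B ⁅Z, E j⁆ (f k)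
        = ∑ j, B v (E j) * B v (E j) := Finset.sum_congr rfl fun j _ => by rw [hva]
      _ = B v v := hPar v v
      _ = ∑ l, B v (f l) * B v (f l) := (hfPar v v hvmem hvmem).symm
      _ = ∑ l, B ⁅Z, f l⁆ (f k) * B ⁅Z, f l⁆ (f k) :=
          Finset.sum_congr rfl fun l _ => by rw [hvf]
  have hWG : ∑ i, B ⁅Z, E i⁆ ⁅Z, E i⁆ = ∑ k, B ⁅Z, f k⁆ ⁅Z, f k⁆ := by
    calc ∑ i, B ⁅Z, E i⁆ ⁅Z, E i⁆
        = ∑ i, ∑ k, B ⁅Z, E i⁆ (f k) * B ⁅Z, E i⁆ (f k) :=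
          Finset.sum_congr rfl fun i _ => (hfPar _ _ (hwI i) (hwI i)).symm
      _ = ∑ k, ∑ i, B ⁅Z, E i⁆ (f k) * B ⁅Z, E i⁆ (f k) := Finset.sum_comm
      _ = ∑ k, ∑ l, B ⁅Z, f l⁆ (f k) * B ⁅Z, f l⁆ (f k) :=
          Finset.sum_congr rfl fun k _ => hVK k
      _ = ∑ l, ∑ k, B ⁅Z, f l⁆ (f k) * B ⁅Z, f l⁆ (f k) := Finset.sum_comm
      _ = ∑ l, B ⁅Z, f l⁆ ⁅Z, f l⁆ :=
          Finset.sum_congr rfl fun l _ => hfPar _ _ (hgI l) (hgI l)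
  -- conclusion
  simp only [ricNilForm]
  rw [Finset.sum_sub_distrib, ← Finset.mul_sum, ← Finset.mul_sum]
  rw [show (∑ k, ∑ i, ∑ j, (B (f k) ⁅E i, E j⁆) * (B (f k) ⁅E i, E j⁆))
      = 2 * ∑ i, B ⁅Z, E i⁆ ⁅Z, E i⁆ from hS1a.trans hS1]
  rw [show (∑ k, ∑ i, ∑ j, (B ⁅f k, E i⁆ (E j)) * (B ⁅f k, E i⁆ (E j)))
      = ∑ k, B ⁅Z, f k⁆ ⁅Z, f k⁆ from Finset.sum_congr rfl fun k _ => hS2 k]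
  rw [hWG]
  ring
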